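/- Let Y_i, L_i, R_i, Y_j, L_j, R_j be reals with L_i < Y_i < R_i and L_j < Y_j < R_j, X_i, X_j ∈ ℝ^p, and set lo = max(L_j − Y_j, Y_i − R_i), hi = min(R_j − Y_j, Y_i − L_i). For any β ∈ ℝ^p such that d := e_i(β) − e_j(β) ∉ {lo, 0, hi}, the function h_{ij} is differentiable at β with gradient ∇h_{ij}(β) = −sgn(d)·(X_i − X_j) = −ξ_{ij}(β) if lo < d < hi, and ∇h_{ij}(β) = 0 if d < lo or d > hi. Consequently, at any β at which, for every pair (i,j) with i ≠ j, e_i(β) − e_j(β) avoids the three exceptional values, the loss l_n is differentiable with ∇l_n(β) = −Σ_{i≠j} ξ_{ij}(β); hence the Mann–Whitney estimating equation Σ_{i≠j} ξ_{ij}(β) = 0 is the first-order stationarity condition for minimizing the loss l_n. -/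

import Mathlib

open scoped RealInnerProductSpace BigOperators Classical

noncomputable section

variable {p : ℕ}

/-- Residual `e_k(β) = Y_k − βᵀX_k`. -/
def resid (Y : ℝ) (X : EuclideanSpace ℝ (Fin p)) (β : EuclideanSpace ℝ (Fin p)) : ℝ :=
  Y - ⟪β, X⟫

/-- The Mann–Whitney loss summand `h_{ij}` as a function of `β`. -/
def hfun (Yi Li Ri Yj Lj Rj : ℝ) (Xi Xj : EuclideanSpace ℝ (Fin p))
    (β : EuclideanSpace ℝ (Fin p)) : ℝ :=
  |max (max (min (min (resid Yi Xi β - resid Yj Xj β) (Rj - Yj)) (Yi - Li)) (Lj - Yj))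
    (Yi - Ri)|

/-- The estimating-function summand
`ξ_{ij}(β) = I{L_j(β) < e_i(β) < R_j(β), L_i(β) < e_j(β) < R_i(β)}·(X_i−X_j)·sgn(e_i(β)−e_j(β))`. -/
def xifun (Yi Li Ri Yj Lj Rj : ℝ) (Xi Xj : EuclideanSpace ℝ (Fin p))
    (β : EuclideanSpace ℝ (Fin p)) : EuclideanSpace ℝ (Fin p) :=
  if (Lj - ⟪β, Xj⟫ < resid Yi Xi β ∧ resid Yi Xi β < Rj - ⟪β, Xj⟫ ∧
      Li - ⟪β, Xi⟫ < resid Yj Xj β ∧ resid Yj Xj β < Ri - ⟪β, Xi⟫) then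
    Real.sign (resid Yi Xi β - resid Yj Xj β) • (Xi - Xj)
  else 0


local notation "E" => EuclideanSpace ℝ (Fin p)

lemma grad_sum {ι : Type*} (s : Finset ι) (f : ι → E → ℝ) (g : ι → E) (x : E)
    (h : ∀ i ∈ s, HasGradientAt (f i) (g i) x) :
    HasGradientAt (fun b => ∑ i ∈ s, f i b) (∑ i ∈ s, g i) x := by
  rw [hasGradientAt_iff_hasFDerivAt, map_sum]
  exact HasFDerivAt.fun_sum fun i hi => hasGradientAt_iff_hasFDerivAt.mp (h i hi)

lemma grad_affine (s c : ℝ) (v : E) (β : E) :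
    HasGradientAt (fun x : E => s * (c - ⟪x, v⟫)) ((-s) • v) β := by
  rw [hasGradientAt_iff_hasFDerivAt]
  have h2 : (fun x : E => s * (c - ⟪x, v⟫)) =
      fun x : E => s * c + ((-s) • (innerSL ℝ v)) x := by
    funext x
    simp [real_inner_comm v x]
    ring
  have h3 : (InnerProductSpace.toDual ℝ E) ((-s) • v) = (-s) • (innerSL ℝ v) := by
    ext x
    simp [real_inner_smul_left]
  rw [h2, h3]
  exact ((-s) • (innerSL ℝ v)).hasFDerivAt.const_add (s * c)

lemma dmap_eq (Yi Yj : ℝ) (Xi Xj : E) (β : E) :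
    resid Yi Xi β - resid Yj Xj β = (Yi - Yj) - ⟪β, Xi - Xj⟫ := by
  simp only [resid, inner_sub_right]
  ring

lemma dmap_cont (Yi Yj : ℝ) (Xi Xj : E) :
    Continuous fun x : E => (Yi - Yj) - ⟪x, Xi - Xj⟫ :=
  continuous_const.sub (continuous_id.inner continuous_const)

lemma core_mid (Yi Li Ri Yj Lj Rj : ℝ) (Xi Xj : E)
    (hLYi : Li < Yi) (hYRi : Yi < Ri) (hLYj : Lj < Yj) (hYRj : Yj < Rj) (β : E)
    (hne : resid Yi Xi β - resid Yj Xj β ≠ 0)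
    (hlo : max (Lj - Yj) (Yi - Ri) < resid Yi Xi β - resid Yj Xj β)
    (hhi : resid Yi Xi β - resid Yj Xj β < min (Rj - Yj) (Yi - Li)) :
    HasGradientAt (hfun Yi Li Ri Yj Lj Rj Xi Xj)
      ((-Real.sign (resid Yi Xi β - resid Yj Xj β)) • (Xi - Xj)) β := by
  set c : ℝ := Yi - Yj with hc
  set v : E := Xi - Xj with hv
  set d : E → ℝ := fun x => c - ⟪x, v⟫ with hd
  have hdβ : resid Yi Xi β - resid Yj Xj β = d β := dmap_eq Yi Yj Xi Xj β
  set D : ℝ := d β with hD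
  rw [hdβ] at hne hlo hhi ⊢
  have hU : IsOpen {x : E | max (Lj - Yj) (Yi - Ri) < d x ∧
      d x < min (Rj - Yj) (Yi - Li) ∧ 0 < D * d x} := by
    have hcont : Continuous d := dmap_cont Yi Yj Xi Xj
    exact (isOpen_lt continuous_const hcont).and
      ((isOpen_lt hcont continuous_const).and
        (isOpen_lt continuous_const (continuous_const.mul hcont)))
  have hβU : β ∈ {x : E | max (Lj - Yj) (Yi - Ri) < d x ∧
      d x < min (Rj - Yj) (Yi - Li) ∧ 0 < D * d x} :=
    ⟨hlo, hhi, mul_self_pos.mpr hne⟩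
  have hev : hfun Yi Li Ri Yj Lj Rj Xi Xj =ᶠ[nhds β]
      fun x => Real.sign D * (c - ⟪x, v⟫) := by
    filter_upwards [hU.mem_nhds hβU] with x hx
    obtain ⟨hx1, hx2, hx3⟩ := hx
    rw [max_lt_iff] at hx1
    rw [lt_min_iff] at hx2
    have habs : hfun Yi Li Ri Yj Lj Rj Xi Xj x = |d x| := by
      rw [hfun, dmap_eq Yi Yj Xi Xj x]
      rw [min_eq_left (le_of_lt hx2.1), min_eq_left (le_of_lt hx2.2),
        max_eq_left (le_of_lt hx1.1), max_eq_left (le_of_lt hx1.2)]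
    rw [habs]
    rcases hne.lt_or_gt with hDneg | hDpos
    · have hdx : d x < 0 := by nlinarith
      rw [abs_of_neg hdx, Real.sign_of_neg hDneg]
      show -(d x) = -1 * d x
      ring
    · have hdx : 0 < d x := by nlinarith
      rw [abs_of_pos hdx, Real.sign_of_pos hDpos]
      show d x = 1 * d x
      ring
  exact (grad_affine (Real.sign D) c v β).congr_of_eventuallyEq hev

lemma core_out (Yi Li Ri Yj Lj Rj : ℝ) (Xi Xj : E)
    (hLYi : Li < Yi) (hYRi : Yi < Ri) (hLYj : Lj < Yj) (hYRj : Yj < Rj) (β : E)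
    (hout : resid Yi Xi β - resid Yj Xj β < max (Lj - Yj) (Yi - Ri) ∨
      min (Rj - Yj) (Yi - Li) < resid Yi Xi β - resid Yj Xj β) :
    HasGradientAt (hfun Yi Li Ri Yj Lj Rj Xi Xj) (0 : E) β := by
  set c : ℝ := Yi - Yj with hc
  set v : E := Xi - Xj with hv
  set d : E → ℝ := fun x => c - ⟪x, v⟫ with hd
  have hdβ : resid Yi Xi β - resid Yj Xj β = d β := dmap_eq Yi Yj Xi Xj β
  rw [hdβ] at hout
  have hcont : Continuous d := dmap_cont Yi Yj Xi Xj
  rcases hout with hlt | hgt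
  · have hU : IsOpen {x : E | d x < max (Lj - Yj) (Yi - Ri)} :=
      isOpen_lt hcont continuous_const
    have hev : hfun Yi Li Ri Yj Lj Rj Xi Xj =ᶠ[nhds β]
        fun _ => |max (Lj - Yj) (Yi - Ri)| := by
      filter_upwards [hU.mem_nhds hlt] with x hx
      have hlo0 : max (Lj - Yj) (Yi - Ri) < 0 := by
        rw [max_lt_iff]; constructor <;> linarith
      rw [hfun, dmap_eq Yi Yj Xi Xj x,
        min_eq_left (by linarith : d x ≤ Rj - Yj),
        min_eq_left (by linarith : d x ≤ Yi - Li),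
        max_assoc, max_eq_right (le_of_lt hx)]
    exact (hasGradientAt_const β _).congr_of_eventuallyEq hev
  · have hU : IsOpen {x : E | min (Rj - Yj) (Yi - Li) < d x} :=
      isOpen_lt continuous_const hcont
    have hev : hfun Yi Li Ri Yj Lj Rj Xi Xj =ᶠ[nhds β]
        fun _ => |min (Rj - Yj) (Yi - Li)| := by
      filter_upwards [hU.mem_nhds hgt] with x hx
      have hhi0 : 0 < min (Rj - Yj) (Yi - Li) := by
        rw [lt_min_iff]; constructor <;> linarith
      rw [hfun, dmap_eq Yi Yj Xi Xj x,
        min_assoc, min_eq_right (le_of_lt hx),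
        max_eq_left (by linarith : Lj - Yj ≤ min (Rj - Yj) (Yi - Li)),
        max_eq_left (by linarith : Yi - Ri ≤ min (Rj - Yj) (Yi - Li))]
    exact (hasGradientAt_const β _).congr_of_eventuallyEq hev


lemma xifun_mid (Yi Li Ri Yj Lj Rj : ℝ) (Xi Xj : E) (β : E)
    (hlo : max (Lj - Yj) (Yi - Ri) < resid Yi Xi β - resid Yj Xj β)
    (hhi : resid Yi Xi β - resid Yj Xj β < min (Rj - Yj) (Yi - Li)) :
    (-Real.sign (resid Yi Xi β - resid Yj Xj β)) • (Xi - Xj) =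
      -(xifun Yi Li Ri Yj Lj Rj Xi Xj β) := by
  rw [max_lt_iff] at hlo
  rw [lt_min_iff] at hhi
  have hcond : (Lj - ⟪β, Xj⟫ < resid Yi Xi β ∧ resid Yi Xi β < Rj - ⟪β, Xj⟫ ∧
      Li - ⟪β, Xi⟫ < resid Yj Xj β ∧ resid Yj Xj β < Ri - ⟪β, Xi⟫) := by
    simp only [resid] at hlo hhi ⊢
    refine ⟨by linarith [hlo.1], by linarith [hhi.1], by linarith [hhi.2], by linarith [hlo.2]⟩
  rw [xifun, if_pos hcond, neg_smul]

lemma xifun_out (Yi Li Ri Yj Lj Rj : ℝ) (Xi Xj : E) (β : E)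
    (hout : resid Yi Xi β - resid Yj Xj β < max (Lj - Yj) (Yi - Ri) ∨
      min (Rj - Yj) (Yi - Li) < resid Yi Xi β - resid Yj Xj β) :
    xifun Yi Li Ri Yj Lj Rj Xi Xj β = 0 := by
  rw [xifun, if_neg]
  rintro ⟨h1, h2, h3, h4⟩
  simp only [resid] at h1 h2 h3 h4 hout
  rcases hout with h | h
  · rw [lt_max_iff] at h
    rcases h with h | h <;> linarith
  · rw [min_lt_iff] at h
    rcases h with h | h <;> linarith

/-- **Differentiability of the Mann–Whitney loss off the kink set**: if
`d = e_i(β) − e_j(β) ∉ {lo, 0, hi}` with `lo = max(L_j−Y_j, Y_i−R_i)` and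
`hi = min(R_j−Y_j, Y_i−L_i)`, then `h_{ij}` is differentiable at `β` with gradient
`−sgn(d)·(X_i−X_j) = −ξ_{ij}(β)` when `lo < d < hi`, and gradient `0` when `d < lo` or
`d > hi`. Consequently, at any `β` at which every pair `i ≠ j` avoids the three exceptional
values, the loss `l_n(β) = Σ_{i≠j} h_{ij}(β)` is differentiable with gradient
`−Σ_{i≠j} ξ_{ij}(β)`; hence the Mann–Whitney estimating equation `Σ_{i≠j} ξ_{ij}(β) = 0`
is the first-order stationarity condition for minimizing the loss. -/
theorem hfun_gradient_and_loss_gradient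
    {n : ℕ} (Y L R : Fin n → ℝ) (X : Fin n → EuclideanSpace ℝ (Fin p))
    (hLY : ∀ k, L k < Y k) (hYR : ∀ k, Y k < R k) :
    (∀ (i j : Fin n) (β : EuclideanSpace ℝ (Fin p)),
      resid (Y i) (X i) β - resid (Y j) (X j) β ≠ max (L j - Y j) (Y i - R i) →
      resid (Y i) (X i) β - resid (Y j) (X j) β ≠ 0 →
      resid (Y i) (X i) β - resid (Y j) (X j) β ≠ min (R j - Y j) (Y i - L i) →
      ((max (L j - Y j) (Y i - R i) < resid (Y i) (X i) β - resid (Y j) (X j) β ∧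
          resid (Y i) (X i) β - resid (Y j) (X j) β < min (R j - Y j) (Y i - L i) →
        HasGradientAt (hfun (Y i) (L i) (R i) (Y j) (L j) (R j) (X i) (X j))
          ((-Real.sign (resid (Y i) (X i) β - resid (Y j) (X j) β)) • (X i - X j)) β ∧
        (-Real.sign (resid (Y i) (X i) β - resid (Y j) (X j) β)) • (X i - X j) =
          -(xifun (Y i) (L i) (R i) (Y j) (L j) (R j) (X i) (X j) β)) ∧
      (resid (Y i) (X i) β - resid (Y j) (X j) β < max (L j - Y j) (Y i - R i) ∨
          min (R j - Y j) (Y i - L i) < resid (Y i) (X i) β - resid (Y j) (X j) β →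
        HasGradientAt (hfun (Y i) (L i) (R i) (Y j) (L j) (R j) (X i) (X j))
          (0 : EuclideanSpace ℝ (Fin p)) β))) ∧
    (∀ β : EuclideanSpace ℝ (Fin p),
      (∀ i j : Fin n, i ≠ j →
        resid (Y i) (X i) β - resid (Y j) (X j) β ≠ max (L j - Y j) (Y i - R i) ∧
        resid (Y i) (X i) β - resid (Y j) (X j) β ≠ 0 ∧
        resid (Y i) (X i) β - resid (Y j) (X j) β ≠ min (R j - Y j) (Y i - L i)) →
      HasGradientAt
        (fun b => ∑ i : Fin n, ∑ j : Fin n, if i = j then 0 else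
          hfun (Y i) (L i) (R i) (Y j) (L j) (R j) (X i) (X j) b)
        (-(∑ i : Fin n, ∑ j : Fin n, if i = j then 0 else
          xifun (Y i) (L i) (R i) (Y j) (L j) (R j) (X i) (X j) β)) β) := by

  constructor
  · intro i j β h1 h2 h3
    constructor
    · intro hmid
      exact ⟨core_mid (Y i) (L i) (R i) (Y j) (L j) (R j) (X i) (X j)
          (hLY i) (hYR i) (hLY j) (hYR j) β h2 hmid.1 hmid.2,
        xifun_mid (Y i) (L i) (R i) (Y j) (L j) (R j) (X i) (X j) β hmid.1 hmid.2⟩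
    · intro hout
      exact core_out (Y i) (L i) (R i) (Y j) (L j) (R j) (X i) (X j)
        (hLY i) (hYR i) (hLY j) (hYR j) β hout
  · intro β hβ
    have key : ∀ i j : Fin n, i ≠ j →
        HasGradientAt (hfun (Y i) (L i) (R i) (Y j) (L j) (R j) (X i) (X j))
          (-(xifun (Y i) (L i) (R i) (Y j) (L j) (R j) (X i) (X j) β)) β := by
      intro i j hij
      obtain ⟨h1, h2, h3⟩ := hβ i j hij
      rcases lt_or_gt_of_ne h1 with hlt | hgt
      · rw [xifun_out (Y i) (L i) (R i) (Y j) (L j) (R j) (X i) (X j) β (Or.inl hlt),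
          neg_zero]
        exact core_out (Y i) (L i) (R i) (Y j) (L j) (R j) (X i) (X j)
          (hLY i) (hYR i) (hLY j) (hYR j) β (Or.inl hlt)
      · rcases lt_or_gt_of_ne h3 with hlt2 | hgt2
        · rw [← xifun_mid (Y i) (L i) (R i) (Y j) (L j) (R j) (X i) (X j) β hgt hlt2]
          exact core_mid (Y i) (L i) (R i) (Y j) (L j) (R j) (X i) (X j)
            (hLY i) (hYR i) (hLY j) (hYR j) β h2 hgt hlt2
        · rw [xifun_out (Y i) (L i) (R i) (Y j) (L j) (R j) (X i) (X j) β (Or.inr hgt2),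
            neg_zero]
          exact core_out (Y i) (L i) (R i) (Y j) (L j) (R j) (X i) (X j)
            (hLY i) (hYR i) (hLY j) (hYR j) β (Or.inr hgt2)
    have hsum : (-(∑ i : Fin n, ∑ j : Fin n, if i = j then 0 else
          xifun (Y i) (L i) (R i) (Y j) (L j) (R j) (X i) (X j) β)) =
        ∑ i : Fin n, ∑ j : Fin n, (if i = j then (0 : E) else
          -(xifun (Y i) (L i) (R i) (Y j) (L j) (R j) (X i) (X j) β)) := by
      rw [← Finset.sum_neg_distrib]
      refine Finset.sum_congr rfl fun i _ => ?_
      rw [← Finset.sum_neg_distrib]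
      exact Finset.sum_congr rfl fun j _ => by rw [apply_ite Neg.neg, neg_zero]
    rw [hsum]
    apply grad_sum
    intro i _
    apply grad_sum
    intro j _
    by_cases hij : i = j
    · simp only [if_pos hij]
      exact hasGradientAt_const β (0 : ℝ)
    · simp only [if_neg hij]
      exact key i j hij


end
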